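/- Let E be a real inner product space, f : E → ℝ differentiable with gradient ∇f, L' ≥ μ' > 0, η > 0, B ≥ 0, φ ≥ 0, N ≥ 1. Let f_i : E → ℝ for i ∈ Fin N be differentiable client losses with weights a_i ≥ 0, ∑ a_i = 1, and f = ∑ a_i f_i. Assume: (i) each f_i (and hence f) satisfies the μ'-convexity inequality f_i(w₁) − f_i(w₂) ≥ ⟨∇f_i(w₂), w₁ − w₂⟩ + (μ'/2)‖w₁ − w₂‖² and the L'-smoothness inequality f_i(w₁) − f_i(w₂) ≤ ⟨∇f_i(w₂), w₁ − w₂⟩ + (L'/2)‖w₁ − w₂‖²; (ii) each f_i has a minimizer w*_i with ∇f_i(w*_i) = 0, and f has minimizer w^I with ‖w*_i − w^I‖ ≤ φ for all i; (iii) the iterates w : ℕ → E follow the aggregated gradient step w(t+1) = w(t) − η·∇f(w(t)) with η ≤ 1/L'; (iv) ‖w(t) − w^I‖ ≤ B for all t. Then for every T ≥ 1, writing ŵ(T) = (1/T)·∑_{t=1}^{T} w(t+1), one has f(ŵ(T)) − f(w^I) ≤ B²/(2·η·T) + (2·L'/(μ'·T²))·( L'·B² + (μ' + L')·φ² ). 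-/

import Mathlib

open RealInnerProductSpace

set_option maxHeartbeats 2000000 in
/-- Convergence of FedIPG. With μ'-convex, L'-smooth client losses,
bounded heterogeneity `‖w*_i − w^I‖ ≤ φ`, compact iterates `‖w(t) − w^I‖ ≤ B`, and
aggregated gradient steps `w(t+1) = w(t) − η∇f(w(t))`, the running average
`wavg(T) = (1/T)∑_{t=1}^T w(t+1)` satisfies
`f(wavg(T)) − f(w^I) ≤ B²/(2ηT) + (2L'/(μ'T²))(L'B² + (μ'+L')φ²)`. -/
theorem fedipg_convergence
    {E : Type*} [NormedAddCommGroup E] [InnerProductSpace ℝ E] [CompleteSpace E]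
    (N : ℕ) (hN : 0 < N)
    (L' μ' η B φ : ℝ) (hμ' : 0 < μ') (hL' : μ' ≤ L') (hη : 0 < η) (hηL : η ≤ 1 / L')
    (hB : 0 ≤ B) (hφ : 0 ≤ φ)
    (a : Fin N → ℝ) (ha : ∀ i, 0 ≤ a i) (hasum : ∑ i, a i = 1)
    (fi : Fin N → E → ℝ) (gi : Fin N → E → E)
    (hgi : ∀ i w, HasGradientAt (fi i) (gi i w) w)
    (f : E → ℝ) (hfdef : ∀ w, f w = ∑ i, a i * fi i w)
    (gf : E → E) (hgf : ∀ w, HasGradientAt f (gf w) w)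
    (hconv : ∀ i w₁ w₂,
      fi i w₁ - fi i w₂ ≥ ⟪gi i w₂, w₁ - w₂⟫ + μ' / 2 * ‖w₁ - w₂‖ ^ 2)
    (hsmooth : ∀ i w₁ w₂,
      fi i w₁ - fi i w₂ ≤ ⟪gi i w₂, w₁ - w₂⟫ + L' / 2 * ‖w₁ - w₂‖ ^ 2)
    (wstar : Fin N → E) (hwstar : ∀ i, gi i (wstar i) = 0)
    (hwstarmin : ∀ i w, fi i (wstar i) ≤ fi i w)
    (wI : E) (hwI : ∀ w, f wI ≤ f w)
    (hhetero : ∀ i, ‖wstar i - wI‖ ≤ φ)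
    (w : ℕ → E) (hupd : ∀ t, w (t + 1) = w t - η • gf (w t))
    (hcompact : ∀ t, ‖w t - wI‖ ≤ B)
    (T : ℕ) (hT : 1 ≤ T) :
    f ((1 / (T : ℝ)) • ∑ t ∈ Finset.Icc 1 T, w (t + 1)) - f wI ≤
      B ^ 2 / (2 * η * T) + 2 * L' / (μ' * T ^ 2) * (L' * B ^ 2 + (μ' + L') * φ ^ 2) := by
  have hL'pos : 0 < L' := lt_of_lt_of_le hμ' hL'
  have hηL' : η * L' ≤ 1 := by
    rw [le_div_iff₀ hL'pos] at hηL; linarith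
  have hTpos : (0:ℝ) < T := by exact_mod_cast hT
  -- the gradient of f is the weighted sum of the client gradients
  have key : ∀ x : E, gf x = ∑ i, a i • gi i x := by
    intro x
    refine (hgf x).unique ?_
    rw [hasGradientAt_iff_hasFDerivAt]
    have hmap : (InnerProductSpace.toDual ℝ E) (∑ i, a i • gi i x)
        = ∑ i, a i • (InnerProductSpace.toDual ℝ E) (gi i x) := by
      simp
    rw [hmap]
    have hfd : HasFDerivAt (fun w => ∑ i, a i * fi i w)
        (∑ i, a i • (InnerProductSpace.toDual ℝ E) (gi i x)) x :=
      HasFDerivAt.fun_sum fun i _ => ((hgi i x).hasFDerivAt).const_mul (a i)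
    have hfe : f = fun w => ∑ i, a i * fi i w := funext hfdef
    rw [hfe]; exact hfd
  -- convexity inequality for f
  have hconvf : ∀ w₁ w₂ : E,
      f w₁ - f w₂ ≥ ⟪gf w₂, w₁ - w₂⟫ + μ' / 2 * ‖w₁ - w₂‖ ^ 2 := by
    intro w₁ w₂
    rw [hfdef w₁, hfdef w₂, key w₂, sum_inner]
    simp only [real_inner_smul_left]
    have h2 : ∑ i, a i * (⟪gi i w₂, w₁ - w₂⟫ + μ' / 2 * ‖w₁ - w₂‖ ^ 2)
        ≤ ∑ i, (a i * fi i w₁ - a i * fi i w₂) := by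
      refine Finset.sum_le_sum fun i _ => ?_
      have h := hconv i w₁ w₂
      have := mul_le_mul_of_nonneg_left h (ha i)
      nlinarith
    have h3 : ∑ i, a i * (⟪gi i w₂, w₁ - w₂⟫ + μ' / 2 * ‖w₁ - w₂‖ ^ 2)
        = ∑ i, a i * ⟪gi i w₂, w₁ - w₂⟫ + μ' / 2 * ‖w₁ - w₂‖ ^ 2 := by
      simp only [mul_add]
      rw [Finset.sum_add_distrib, ← Finset.sum_mul, hasum, one_mul]
    rw [Finset.sum_sub_distrib] at h2
    linarith
  -- smoothness inequality for f
  have hsmoothf : ∀ w₁ w₂ : E,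
      f w₁ - f w₂ ≤ ⟪gf w₂, w₁ - w₂⟫ + L' / 2 * ‖w₁ - w₂‖ ^ 2 := by
    intro w₁ w₂
    rw [hfdef w₁, hfdef w₂, key w₂, sum_inner]
    simp only [real_inner_smul_left]
    have h2 : ∑ i, (a i * fi i w₁ - a i * fi i w₂)
        ≤ ∑ i, a i * (⟪gi i w₂, w₁ - w₂⟫ + L' / 2 * ‖w₁ - w₂‖ ^ 2) := by
      refine Finset.sum_le_sum fun i _ => ?_
      have h := hsmooth i w₁ w₂
      have := mul_le_mul_of_nonneg_left h (ha i)
      nlinarith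
    have h3 : ∑ i, a i * (⟪gi i w₂, w₁ - w₂⟫ + L' / 2 * ‖w₁ - w₂‖ ^ 2)
        = ∑ i, a i * ⟪gi i w₂, w₁ - w₂⟫ + L' / 2 * ‖w₁ - w₂‖ ^ 2 := by
      simp only [mul_add]
      rw [Finset.sum_add_distrib, ← Finset.sum_mul, hasum, one_mul]
    rw [Finset.sum_sub_distrib] at h2
    linarith
  -- per-step progress
  have step : ∀ t : ℕ, f (w (t + 1)) - f wI
      ≤ (‖w t - wI‖ ^ 2 - ‖w (t + 1) - wI‖ ^ 2) / (2 * η) := by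
    intro t
    have hupd' := hupd t
    have hre : w (t + 1) - wI = (w t - wI) - η • gf (w t) := by
      rw [hupd']; abel
    have hexp : ‖w (t + 1) - wI‖ ^ 2
        = ‖w t - wI‖ ^ 2 - 2 * (η * ⟪gf (w t), w t - wI⟫) + η ^ 2 * ‖gf (w t)‖ ^ 2 := by
      rw [hre, norm_sub_sq_real, real_inner_smul_right, norm_smul, real_inner_comm]
      rw [Real.norm_eq_abs, abs_of_pos hη]
      ring
    have hdiff : w (t + 1) - w t = -(η • gf (w t)) := by rw [hupd']; abel
    have hsm := hsmoothf (w (t + 1)) (w t)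
    rw [hdiff] at hsm
    have hsm' : f (w (t + 1)) - f (w t)
        ≤ -(η * ‖gf (w t)‖ ^ 2) + L' / 2 * (η ^ 2 * ‖gf (w t)‖ ^ 2) := by
      have e1 : ⟪gf (w t), -(η • gf (w t))⟫ = -(η * ‖gf (w t)‖ ^ 2) := by
        rw [inner_neg_right, real_inner_smul_right, real_inner_self_eq_norm_sq]
      have e2 : ‖-(η • gf (w t))‖ ^ 2 = η ^ 2 * ‖gf (w t)‖ ^ 2 := by
        rw [norm_neg, norm_smul, Real.norm_eq_abs, abs_of_pos hη]; ring
      rw [e1, e2] at hsm; linarith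
    have hcv := hconvf wI (w t)
    have hcvin : ⟪gf (w t), wI - w t⟫ = -⟪gf (w t), w t - wI⟫ := by
      rw [← inner_neg_right]; congr 1; abel
    rw [hcvin] at hcv
    rw [le_div_iff₀ (by positivity : (0:ℝ) < 2 * η)]
    have hG : 0 ≤ ‖gf (w t)‖ ^ 2 := sq_nonneg _
    have hA : 0 ≤ ‖wI - w t‖ ^ 2 := sq_nonneg _
    have h1 : 0 ≤ η * (1 - η * L') * ‖gf (w t)‖ ^ 2 :=
      mul_nonneg (mul_nonneg hη.le (by linarith)) hG
    nlinarith [mul_le_mul_of_nonneg_left hcv (by positivity : (0:ℝ) ≤ 2 * η),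
      mul_nonneg (mul_nonneg hη.le hμ'.le) hA]
  -- telescoping sum
  have htel : ∀ S : ℕ, ∑ t ∈ Finset.Icc 1 S, (‖w t - wI‖ ^ 2 - ‖w (t + 1) - wI‖ ^ 2)
      = ‖w 1 - wI‖ ^ 2 - ‖w (S + 1) - wI‖ ^ 2 := by
    intro S
    induction S with
    | zero => simp
    | succ n ih =>
      rw [Finset.sum_Icc_succ_top (by omega : 1 ≤ n + 1), ih]; ring
  have hsum : ∑ t ∈ Finset.Icc 1 T, (f (w (t + 1)) - f wI) ≤ B ^ 2 / (2 * η) := by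
    calc ∑ t ∈ Finset.Icc 1 T, (f (w (t + 1)) - f wI)
        ≤ ∑ t ∈ Finset.Icc 1 T, (‖w t - wI‖ ^ 2 - ‖w (t + 1) - wI‖ ^ 2) / (2 * η) :=
          Finset.sum_le_sum fun t _ => step t
      _ = (‖w 1 - wI‖ ^ 2 - ‖w (T + 1) - wI‖ ^ 2) / (2 * η) := by
          rw [← Finset.sum_div, htel T]
      _ ≤ B ^ 2 / (2 * η) := by
          have hx : ‖w 1 - wI‖ ^ 2 ≤ B ^ 2 := by
            have := hcompact 1; nlinarith [norm_nonneg (w 1 - wI)]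
          have hy : 0 ≤ ‖w (T + 1) - wI‖ ^ 2 := sq_nonneg _
          exact div_le_div_of_nonneg_right (by linarith) (by positivity)
  -- Jensen-type inequality for the averaged iterate
  set wavg : E := (1 / (T : ℝ)) • ∑ t ∈ Finset.Icc 1 T, w (t + 1) with hwavg
  clear_value wavg
  have hcard : (Finset.Icc 1 T).card = T := by rw [Nat.card_Icc]; omega
  have hsumw : ∑ t ∈ Finset.Icc 1 T, (w (t + 1) - wavg) = 0 := by
    rw [Finset.sum_sub_distrib, Finset.sum_const, hcard, hwavg,
      ← Nat.cast_smul_eq_nsmul ℝ, smul_smul]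
    rw [mul_one_div, div_self hTpos.ne', one_smul, sub_self]
  have hjensen : (T : ℝ) * (f wavg - f wI) ≤ ∑ t ∈ Finset.Icc 1 T, (f (w (t + 1)) - f wI) := by
    have hineq : ∑ t ∈ Finset.Icc 1 T, ⟪gf wavg, w (t + 1) - wavg⟫
        ≤ ∑ t ∈ Finset.Icc 1 T, (f (w (t + 1)) - f wavg) := by
      refine Finset.sum_le_sum fun t _ => ?_
      have := hconvf (w (t + 1)) wavg
      nlinarith [sq_nonneg ‖w (t + 1) - wavg‖]
    have hz : ∑ t ∈ Finset.Icc 1 T, ⟪gf wavg, w (t + 1) - wavg⟫ = 0 := by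
      rw [← inner_sum, hsumw, inner_zero_right]
    rw [hz, Finset.sum_sub_distrib, Finset.sum_const, hcard, nsmul_eq_mul] at hineq
    rw [Finset.sum_sub_distrib, Finset.sum_const, hcard, nsmul_eq_mul]
    linarith
  have hmain : f wavg - f wI ≤ B ^ 2 / (2 * η * T) := by
    have h2 : (T : ℝ) * (f wavg - f wI) ≤ B ^ 2 / (2 * η) := le_trans hjensen hsum
    have h3 : f wavg - f wI ≤ B ^ 2 / (2 * η) / T := by
      rw [le_div_iff₀ hTpos]
      linarith [h2]
    rw [div_div] at h3
    linarith [h3]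
  have hnn : 0 ≤ 2 * L' / (μ' * (T : ℝ) ^ 2) * (L' * B ^ 2 + (μ' + L') * φ ^ 2) := by
    have h1 : (0:ℝ) < μ' * (T : ℝ) ^ 2 := mul_pos hμ' (pow_pos hTpos 2)
    have h2 : (0:ℝ) ≤ L' * B ^ 2 := mul_nonneg hL'pos.le (sq_nonneg _)
    have h3 : (0:ℝ) ≤ (μ' + L') * φ ^ 2 := mul_nonneg (by linarith) (sq_nonneg _)
    have h4 : (0:ℝ) ≤ 2 * L' / (μ' * (T : ℝ) ^ 2) := div_nonneg (by linarith) h1.le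
    have h5 : (0:ℝ) ≤ L' * B ^ 2 + (μ' + L') * φ ^ 2 := by linarith
    exact mul_nonneg h4 h5
  linarith
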